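/- Let λ be a Young diagram with inner corners In(λ) (boxes c ∉ λ with λ ∪ c a Young diagram) and outer corners Out(λ). Assume the monomials z_c = t^{i(c)} q^{j(c)} for c ranging over In(λ) ∪ Out(λ) are pairwise distinct in ℚ(q,t). Then ∑_{c ∈ In(λ)} f_{λ,c} = 1, where f_{λ,c} := (∏_{d ∈ Out(λ)} (z_c - z_d)) / (∏_{e ∈ In(λ), e ≠ c} (z_c - z_e)). -/

import Mathlib

open MvPolynomial

/-- A box `c ∉ λ` is an inner corner if `λ ∪ {c}` is again a Young diagram. -/
def IsInnerCorner (μ : YoungDiagram) (c : ℕ × ℕ) : Prop :=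
  c ∉ μ.cells ∧ IsLowerSet (insert c (μ.cells : Set (ℕ × ℕ)))

/-- A box `c ∉ λ` with both coordinates positive is an outer corner if the diagonally
adjacent box `c - (1,1)` is a removable box of `λ`. -/
def IsOuterCorner (μ : YoungDiagram) (c : ℕ × ℕ) : Prop :=
  c ∉ μ.cells ∧ 1 ≤ c.1 ∧ 1 ≤ c.2 ∧ (c.1 - 1, c.2 - 1) ∈ μ.cells ∧
    IsLowerSet ((μ.cells.erase (c.1 - 1, c.2 - 1) : Finset (ℕ × ℕ)) : Set (ℕ × ℕ))

noncomputable def zbox (c : ℕ × ℕ) : FractionRing (MvPolynomial (Fin 2) ℚ) :=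
  algebraMap (MvPolynomial (Fin 2) ℚ) _ ((X 0) ^ c.2 * (X 1) ^ c.1)

open Polynomial Finset in

lemma lagrange_key {F : Type*} [Field F] {ι : Type*} [DecidableEq ι]
    (A B : Finset ι) (v : ι → F) (hinj : Set.InjOn v ↑A)
    (hcard : A.card = B.card + 1) :
    ∑ i ∈ A, (∏ j ∈ B, (v i - v j)) / (∏ k ∈ A.erase i, (v i - v k)) = 1 := by
  set n := B.card with hn
  set P : F[X] := ∏ j ∈ B, (Polynomial.X - Polynomial.C (v j)) with hP
  have hPmonic : P.Monic := monic_prod_of_monic _ _ fun j _ => monic_X_sub_C _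
  have hPdeg : P.natDegree = n := by
    simp [hP, natDegree_prod_of_monic _ _ (fun j _ => monic_X_sub_C (v j)), hn]
  have hdeglt : P.degree < A.card := by
    rw [degree_eq_natDegree hPmonic.ne_zero, hPdeg, hcard]
    exact_mod_cast Nat.lt_succ_self n
  have hinterp := Lagrange.eq_interpolate hinj hdeglt
  have hc := congrArg (fun f => f.coeff n) hinterp
  simp only [Lagrange.interpolate_apply, finset_sum_coeff, Polynomial.coeff_C_mul] at hc
  have hcoeffP : P.coeff n = 1 := by
    rw [← hPdeg]; exact hPmonic.coeff_natDegree
  have hbasis : ∀ i ∈ A, (Lagrange.basis A v i).coeff n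
      = (∏ k ∈ A.erase i, (v i - v k))⁻¹ := by
    intro i hi
    have hdegb : (Lagrange.basis A v i).degree = n := by
      rw [Lagrange.degree_basis hinj hi, hcard]; simp
    have hnd : (Lagrange.basis A v i).natDegree = n :=
      natDegree_eq_of_degree_eq_some hdegb
    rw [← hnd, ← leadingCoeff]
    unfold Lagrange.basis
    rw [leadingCoeff_prod]
    rw [← prod_inv_distrib]
    refine prod_congr rfl fun j hj => ?_
    have hne : v i ≠ v j := by
      intro h
      exact (mem_erase.mp hj).1.symm (hinj hi (mem_erase.mp hj).2 h) |>.elim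
    show (Lagrange.basisDivisor (v i) (v j)).leadingCoeff = (v i - v j)⁻¹
    rw [Lagrange.basisDivisor, leadingCoeff_mul, leadingCoeff_C,
      (monic_X_sub_C (v j)).leadingCoeff, mul_one]
  rw [hcoeffP] at hc
  rw [hc]
  refine sum_congr rfl fun i hi => ?_
  rw [hbasis i hi, div_eq_mul_inv]
  congr 1
  rw [Polynomial.eval_prod]
  simp

lemma mem_mu (μ : YoungDiagram) (a b : ℕ) : (a, b) ∈ μ.cells ↔ b < μ.rowLen a := by
  rw [YoungDiagram.mem_cells, YoungDiagram.mem_iff_lt_rowLen]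

lemma inner_iff (μ : YoungDiagram) (i j : ℕ) :
    IsInnerCorner μ (i, j) ↔ j = μ.rowLen i ∧ (i = 0 ∨ μ.rowLen i < μ.rowLen (i - 1)) := by
  constructor
  · rintro ⟨hnot, hls⟩
    rw [mem_mu, not_lt] at hnot
    have hle : j ≤ μ.rowLen i := by
      rcases Nat.eq_zero_or_pos j with h0 | hpos
      · omega
      · have h1 : (i, j - 1) ∈ insert (i, j) (μ.cells : Set (ℕ × ℕ)) :=
          hls (Prod.mk_le_mk.mpr ⟨le_refl i, Nat.sub_le j 1⟩) (Set.mem_insert _ _)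
        rcases Set.mem_insert_iff.mp h1 with h1 | h1
        · simp only [Prod.mk.injEq] at h1; omega
        · have := (mem_mu μ i (j - 1)).mp h1; omega
    refine ⟨by omega, ?_⟩
    rcases Nat.eq_zero_or_pos i with h0 | hpos
    · exact Or.inl h0
    · right
      have h1 : (i - 1, j) ∈ insert (i, j) (μ.cells : Set (ℕ × ℕ)) :=
        hls (Prod.mk_le_mk.mpr ⟨Nat.sub_le i 1, le_refl j⟩) (Set.mem_insert _ _)
      rcases Set.mem_insert_iff.mp h1 with h1 | h1
      · simp only [Prod.mk.injEq] at h1; omega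
      · have := (mem_mu μ (i - 1) j).mp h1; omega
  · rintro ⟨rfl, hcond⟩
    refine ⟨by rw [mem_mu]; omega, ?_⟩
    rintro ⟨a, b⟩ ⟨a', b'⟩ hle hmem
    -- hle : (a', b') ≤ (a, b), hmem : (a, b) ∈ insert, goal : (a', b') ∈ insert
    simp only [Prod.mk_le_mk] at hle
    rcases Set.mem_insert_iff.mp hmem with h | h
    · simp only [Prod.mk.injEq] at h
      obtain ⟨rfl, rfl⟩ := h
      by_cases hab : (a', b') = (a, μ.rowLen a)
      · exact hab ▸ Set.mem_insert _ _
      · refine Set.mem_insert_iff.mpr (Or.inr ?_)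
        rw [Finset.mem_coe, mem_mu]
        simp only [Prod.mk.injEq, not_and] at hab
        have h1 := μ.rowLen_anti a' a hle.1
        rcases lt_or_eq_of_le hle.2 with h2 | h2
        · omega
        · have h3 : a' < a := by
            rcases lt_or_eq_of_le hle.1 with h | h
            · exact h
            · exact absurd h2 (hab h)
          have h4 := μ.rowLen_anti a' (a - 1) (by omega)
          rcases hcond with h5 | h5 <;> omega
    · exact Set.mem_insert_iff.mpr (Or.inr (μ.isLowerSet (Prod.mk_le_mk.mpr hle) h))

lemma outer_iff (μ : YoungDiagram) (i j : ℕ) :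
    IsOuterCorner μ (i, j) ↔ 1 ≤ i ∧ j = μ.rowLen (i - 1) ∧ μ.rowLen i < μ.rowLen (i - 1) := by
  constructor
  · rintro ⟨hnot, hi, hj, hmem, hls⟩
    simp only at hi hj hmem hls
    rw [mem_mu] at hmem
    have h1 : μ.rowLen (i - 1) ≤ j := by
      by_contra h
      push_neg at h
      have hin : (i - 1, j) ∈ (μ.cells.erase (i - 1, j - 1) : Finset (ℕ × ℕ)) := by
        rw [Finset.mem_erase, mem_mu]
        exact ⟨fun hc => by simp only [Prod.mk.injEq] at hc; omega, h⟩
      have h2 := hls (a := ((i - 1 : ℕ), j)) (b := ((i - 1 : ℕ), j - 1))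
        (Prod.mk_le_mk.mpr ⟨le_refl _, Nat.sub_le j 1⟩) hin
      rw [Finset.mem_coe, Finset.mem_erase] at h2
      exact h2.1 rfl
    have h2 : μ.rowLen i ≤ j - 1 := by
      by_contra h
      push_neg at h
      have hin : (i, j - 1) ∈ (μ.cells.erase (i - 1, j - 1) : Finset (ℕ × ℕ)) := by
        rw [Finset.mem_erase, mem_mu]
        exact ⟨fun hc => by simp only [Prod.mk.injEq] at hc; omega, h⟩
      have h3 := hls (a := (i, j - 1)) (b := ((i - 1 : ℕ), j - 1))
        (Prod.mk_le_mk.mpr ⟨Nat.sub_le i 1, le_refl _⟩) hin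
      rw [Finset.mem_coe, Finset.mem_erase] at h3
      exact h3.1 rfl
    exact ⟨hi, by omega, by omega⟩
  · rintro ⟨hi, rfl, hlt⟩
    have hj1 : 1 ≤ μ.rowLen (i - 1) := by omega
    refine ⟨by rw [mem_mu]; omega, hi, hj1, by dsimp only; rw [mem_mu]; omega, ?_⟩
    dsimp only
    rintro ⟨a, b⟩ ⟨a', b'⟩ hle hmem
    -- hle : (a', b') ≤ (a, b), hmem : (a, b) ∈ erase, goal : (a', b') ∈ erase
    simp only [Prod.mk_le_mk] at hle
    rw [Finset.mem_coe, Finset.mem_erase] at hmem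
    rw [Finset.mem_coe, Finset.mem_erase]
    obtain ⟨hne, hmem⟩ := hmem
    refine ⟨?_, μ.isLowerSet (Prod.mk_le_mk.mpr hle) hmem⟩
    intro hc
    simp only [Prod.mk.injEq] at hc
    obtain ⟨rfl, rfl⟩ := hc
    rw [mem_mu] at hmem
    apply hne
    simp only [Prod.mk.injEq]
    have ha : a = i - 1 := by
      by_contra h
      have hai : i ≤ a := by omega
      have := μ.rowLen_anti i a hai
      omega
    subst ha
    omega

lemma card_Inn (μ : YoungDiagram) (Inn Outn : Finset (ℕ × ℕ))
    (hInn : ∀ c, c ∈ Inn ↔ IsInnerCorner μ c)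
    (hOut : ∀ c, c ∈ Outn ↔ IsOuterCorner μ c) :
    Inn.card = Outn.card + 1 := by
  have h0 : (0, μ.rowLen 0) ∈ Inn := (hInn _).mpr ((inner_iff μ 0 _).mpr ⟨rfl, Or.inl rfl⟩)
  have hbij : (Inn.erase (0, μ.rowLen 0)).card = Outn.card := by
    apply Finset.card_bij' (i := fun c _ => (c.1, μ.rowLen (c.1 - 1)))
      (j := fun c _ => (c.1, μ.rowLen c.1))
    · rintro ⟨a, b⟩ ha
      rw [Finset.mem_erase] at ha
      obtain ⟨hne, ha⟩ := ha
      rw [hInn, inner_iff] at ha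
      obtain ⟨rfl, hcond⟩ := ha
      have hpos : 1 ≤ a := by
        rcases hcond with h | h
        · exact absurd (by rw [h]) hne
        · rcases Nat.eq_zero_or_pos a with h0' | h0'
          · subst h0'; simp at h
          · exact h0'
      have hlt : μ.rowLen a < μ.rowLen (a - 1) := by
        rcases hcond with h | h
        · omega
        · exact h
      rw [hOut, outer_iff]
      exact ⟨hpos, rfl, hlt⟩
    · rintro ⟨a, b⟩ ha
      rw [hOut, outer_iff] at ha
      obtain ⟨hpos, rfl, hlt⟩ := ha
      rw [Finset.mem_erase, hInn, inner_iff]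
      exact ⟨fun hc => by simp only [Prod.mk.injEq] at hc; omega, rfl, Or.inr hlt⟩
    · rintro ⟨a, b⟩ ha
      rw [Finset.mem_erase, hInn, inner_iff] at ha
      simp only [Prod.mk.injEq]
      exact ⟨trivial, ha.2.1.symm⟩
    · rintro ⟨a, b⟩ ha
      rw [hOut, outer_iff] at ha
      simp only [Prod.mk.injEq]
      exact ⟨trivial, ha.2.1.symm⟩
  rw [← hbij, Finset.card_erase_of_mem h0]
  have : 0 < Inn.card := Finset.card_pos.mpr ⟨_, h0⟩
  omega

/-- For a Young diagram `λ`, if the monomials `z_c` for `c ∈ In(λ) ∪ Out(λ)` are pairwise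
distinct, then `∑_{c ∈ In(λ)} f_{λ,c} = 1`, where
`f_{λ,c} = ∏_{d ∈ Out(λ)}(z_c - z_d) / ∏_{e ∈ In(λ), e ≠ c}(z_c - z_e)`. -/
theorem sum_f_lambda_c_eq_one (μ : YoungDiagram) (Inn Outn : Finset (ℕ × ℕ))
    (hInn : ∀ c, c ∈ Inn ↔ IsInnerCorner μ c)
    (hOut : ∀ c, c ∈ Outn ↔ IsOuterCorner μ c)
    (hdist : Set.InjOn zbox ↑(Inn ∪ Outn)) :
    ∑ c ∈ Inn, (∏ d ∈ Outn, (zbox c - zbox d)) / (∏ e ∈ Inn.erase c, (zbox c - zbox e))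
      = 1 := by
  exact lagrange_key Inn Outn zbox
    (hdist.mono (Finset.coe_subset.mpr Finset.subset_union_left))
    (card_Inn μ Inn Outn hInn hOut)
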